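/- Let j_6(t) = (3t-1)^3(3t^3 - 3t^2 + 9t - 1)^3/((t-1)^3 t^6 (9t-1)) in Q(t), the j-invariant of the family E_6(t), and let Φ_3(X,Y) be the classical modular polynomial of level 3. Then Φ_3(j_6(t), j_6(1/(9t))) = 0 as an identity in Q(t); that is, the curves E_6(t) and E_6(1/(9t)) are 3-isogenous. -/

import Mathlib

open RatFunc

/-- The classical modular polynomial `Φ₃` of level 3, evaluated at a pair of elements
of a commutative ring. -/
def Phi3 {R : Type*} [CommRing R] (X Y : R) : R :=
  X ^ 4 + Y ^ 4 - X ^ 3 * Y ^ 3 + 2232 * (X ^ 3 * Y ^ 2 + X ^ 2 * Y ^ 3)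
    - 1069956 * (X ^ 3 * Y + X * Y ^ 3) + 36864000 * (X ^ 3 + Y ^ 3)
    + 2587918086 * X ^ 2 * Y ^ 2 + 8900222976000 * (X ^ 2 * Y + X * Y ^ 2)
    + 452984832000000 * (X ^ 2 + Y ^ 2) - 770845966336000000 * X * Y
    + 1855425871872000000000 * (X + Y)

/-- The j-invariant of the family `E₆(t)`, as a rational function of `t`. -/
noncomputable def j6 (t : RatFunc ℚ) : RatFunc ℚ :=
  (3 * t - 1) ^ 3 * (3 * t ^ 3 - 3 * t ^ 2 + 9 * t - 1) ^ 3 /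
    ((t - 1) ^ 3 * t ^ 6 * (9 * t - 1))

instance : CharZero (RatFunc ℚ) :=
  charZero_of_injective_algebraMap (algebraMap ℚ (RatFunc ℚ)).injective

/-- The cleared form of `Phi3 (A/C) (B/D) * (C^4 * D^4)`. -/
def clearedPhi3 {R : Type*} [CommRing R] (A B C D : R) : R :=
  A ^ 4 * D ^ 4 + B ^ 4 * C ^ 4 - A ^ 3 * B ^ 3 * C * D
    + 2232 * (A ^ 3 * B ^ 2 * C * D ^ 2 + A ^ 2 * B ^ 3 * C ^ 2 * D)
    - 1069956 * (A ^ 3 * B * C * D ^ 3 + A * B ^ 3 * C ^ 3 * D)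
    + 36864000 * (A ^ 3 * C * D ^ 4 + B ^ 3 * C ^ 4 * D)
    + 2587918086 * A ^ 2 * B ^ 2 * C ^ 2 * D ^ 2
    + 8900222976000 * (A ^ 2 * B * C ^ 2 * D ^ 3 + A * B ^ 2 * C ^ 3 * D ^ 2)
    + 452984832000000 * (A ^ 2 * C ^ 2 * D ^ 4 + B ^ 2 * C ^ 4 * D ^ 2)
    - 770845966336000000 * A * B * C ^ 3 * D ^ 3
    + 1855425871872000000000 * (A * C ^ 3 * D ^ 4 + B * C ^ 4 * D ^ 3)

lemma phi3_div {K : Type*} [Field K] (A B C D : K) (hC : C ≠ 0) (hD : D ≠ 0) :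
    Phi3 (A / C) (B / D) = clearedPhi3 A B C D / (C ^ 4 * D ^ 4) := by
  have hA : A / C * C = A := div_mul_cancel₀ _ hC
  have hB : B / D * D = B := div_mul_cancel₀ _ hD
  rw [eq_div_iff (mul_ne_zero (pow_ne_zero _ hC) (pow_ne_zero _ hD))]
  calc Phi3 (A / C) (B / D) * (C ^ 4 * D ^ 4)
      = clearedPhi3 (A / C * C) (B / D * D) C D := by rw [Phi3, clearedPhi3]; ring
    _ = clearedPhi3 A B C D := by rw [hA, hB]

set_option maxHeartbeats 4000000 in
lemma key {R : Type*} [CommRing R] (x : R) :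
    clearedPhi3 ((3 * x - 1) ^ 3 * (3 * x ^ 3 - 3 * x ^ 2 + 9 * x - 1) ^ 3)
      ((1 - 3 * x) ^ 3 * (1 - 9 * x + 243 * x ^ 2 - 243 * x ^ 3) ^ 3)
      ((x - 1) ^ 3 * x ^ 6 * (9 * x - 1))
      (x ^ 2 * (1 - 9 * x) ^ 3 * (1 - x)) = 0 := by
  rw [clearedPhi3]
  ring

lemma lin_ne (a b : ℚ) (ha : a ≠ 0) :
    (algebraMap ℚ (RatFunc ℚ) a) * RatFunc.X - algebraMap ℚ (RatFunc ℚ) b ≠ 0 := by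
  have : (algebraMap ℚ (RatFunc ℚ) a) * RatFunc.X - algebraMap ℚ (RatFunc ℚ) b
      = algebraMap (Polynomial ℚ) (RatFunc ℚ) (Polynomial.C a * Polynomial.X - Polynomial.C b) := by
    simp [map_sub, map_mul, RatFunc.algebraMap_X, RatFunc.algebraMap_C]
  rw [this]
  apply RatFunc.algebraMap_ne_zero
  intro h
  have := congrArg (Polynomial.coeff · 1) h
  norm_num [Polynomial.coeff_one, ha] at this

lemma j6_inv_nine_X : j6 (1 / (9 * RatFunc.X)) =
    ((1 - 3 * RatFunc.X) ^ 3 * (1 - 9 * RatFunc.X + 243 * RatFunc.X ^ 2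
        - 243 * RatFunc.X ^ 3) ^ 3) /
      (RatFunc.X ^ 2 * (1 - 9 * RatFunc.X) ^ 3 * (1 - RatFunc.X)) := by
  have hX : (RatFunc.X : RatFunc ℚ) ≠ 0 := RatFunc.X_ne_zero
  have h1 : (RatFunc.X - 1 : RatFunc ℚ) ≠ 0 := by
    have := lin_ne 1 1 one_ne_zero; simpa using this
  have h9 : (9 * RatFunc.X - 1 : RatFunc ℚ) ≠ 0 := by
    have := lin_ne 9 1 (by norm_num)
    simpa [map_ofNat] using this
  have h9X : (9 * RatFunc.X : RatFunc ℚ) ≠ 0 := mul_ne_zero (by norm_num) hX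
  have h1' : (1 - 9 * RatFunc.X : RatFunc ℚ) ≠ 0 := by
    intro h; apply h9; linear_combination -h
  have h1X : (1 - RatFunc.X : RatFunc ℚ) ≠ 0 := by
    intro h; apply h1; linear_combination -h
  have hd : (RatFunc.X ^ 2 * (1 - 9 * RatFunc.X) ^ 3 * (1 - RatFunc.X) : RatFunc ℚ) ≠ 0 :=
    mul_ne_zero (mul_ne_zero (pow_ne_zero _ hX) (pow_ne_zero _ h1')) h1X
  have hu : (1 / (9 * RatFunc.X) : RatFunc ℚ) ≠ 0 := one_div_ne_zero h9X
  have hu1 : (1 / (9 * RatFunc.X) - 1 : RatFunc ℚ) ≠ 0 := by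
    rw [sub_ne_zero]
    intro h
    rw [div_eq_one_iff_eq h9X] at h
    exact h9 (by linear_combination -h)
  have hu9 : (9 * (1 / (9 * RatFunc.X)) - 1 : RatFunc ℚ) ≠ 0 := by
    rw [sub_ne_zero]
    intro h
    apply h1X
    field_simp at h
    rw [h]; ring
  rw [j6, div_eq_div_iff (mul_ne_zero (mul_ne_zero (pow_ne_zero _ hu1) (pow_ne_zero _ hu)) hu9) hd]
  field_simp
  have hXX : (RatFunc.X : RatFunc ℚ) ^ 21 * (RatFunc.X)⁻¹ ^ 21 = 1 := by
    rw [← mul_pow, mul_inv_cancel₀ hX, one_pow]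
  ring

/-- `Φ₃(j₆(t), j₆(1/(9t))) = 0` as an identity in `ℚ(t)`: the curves `E₆(t)` and
`E₆(1/(9t))` are related by a cyclic 3-isogeny. -/
theorem E6_three_isogeny :
    Phi3 (j6 RatFunc.X) (j6 (1 / (9 * RatFunc.X))) = 0 := by
  have hX : (RatFunc.X : RatFunc ℚ) ≠ 0 := RatFunc.X_ne_zero
  have h1 : (RatFunc.X - 1 : RatFunc ℚ) ≠ 0 := by
    have := lin_ne 1 1 one_ne_zero; simpa using this
  have h9 : (9 * RatFunc.X - 1 : RatFunc ℚ) ≠ 0 := by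
    have := lin_ne 9 1 (by norm_num)
    simpa [map_ofNat] using this
  have h1' : (1 - 9 * RatFunc.X : RatFunc ℚ) ≠ 0 := by
    intro h; apply h9; linear_combination -h
  have h1X : (1 - RatFunc.X : RatFunc ℚ) ≠ 0 := by
    intro h; apply h1; linear_combination -h
  have hc : ((RatFunc.X - 1) ^ 3 * RatFunc.X ^ 6 * (9 * RatFunc.X - 1) : RatFunc ℚ) ≠ 0 :=
    mul_ne_zero (mul_ne_zero (pow_ne_zero _ h1) (pow_ne_zero _ hX)) h9
  have hd : (RatFunc.X ^ 2 * (1 - 9 * RatFunc.X) ^ 3 * (1 - RatFunc.X) : RatFunc ℚ) ≠ 0 :=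
    mul_ne_zero (mul_ne_zero (pow_ne_zero _ hX) (pow_ne_zero _ h1')) h1X
  rw [j6_inv_nine_X, j6, phi3_div _ _ _ _ hc hd, key, zero_div]
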